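/- Let k ≥ 1 and n ≥ 1 be integers (viewed as reals) with k·(2^{n/k} − 1) ≤ 2^k − 1. Then k ≥ √n. -/
import Mathlib

/-- Let `k ≥ 1` and `n ≥ 1` be integers with `k·(2^{n/k} − 1) ≤ 2^k − 1`.
Then `k ≥ √n`. -/
theorem sqrt_le_of_ineq (k n : ℕ) (hk : 1 ≤ k) (hn : 1 ≤ n)
    (h : (k : ℝ) * ((2 : ℝ) ^ ((n : ℝ) / (k : ℝ)) - 1) ≤ (2 : ℝ) ^ (k : ℝ) - 1) :
    Real.sqrt n ≤ (k : ℝ) := by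
  have hk' : (1:ℝ) ≤ k := by exact_mod_cast hk
  have hn' : (1:ℝ) ≤ n := by exact_mod_cast hn
  have hkpos : (0:ℝ) < k := by linarith
  have ht : (0:ℝ) < (n:ℝ) / (k:ℝ) := by positivity
  have hx : (0:ℝ) < (2:ℝ) ^ ((n:ℝ)/(k:ℝ)) - 1 := by
    have := Real.one_lt_rpow_iff_of_pos (by norm_num : (0:ℝ) < 2) |>.mpr (Or.inl ⟨by norm_num, ht⟩)
    linarith
  have h2 : (2:ℝ) ^ ((n:ℝ)/(k:ℝ)) - 1 ≤ (k:ℝ) * ((2:ℝ) ^ ((n:ℝ)/(k:ℝ)) - 1) :=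
    le_mul_of_one_le_left hx.le hk'
  have h3 : (2:ℝ) ^ ((n:ℝ)/(k:ℝ)) ≤ (2:ℝ) ^ (k:ℝ) := by linarith
  have h4 : (n:ℝ)/(k:ℝ) ≤ (k:ℝ) :=
    (Real.rpow_le_rpow_left_iff (by norm_num : (1:ℝ) < 2)).mp h3
  have h5 : (n:ℝ) ≤ (k:ℝ) * (k:ℝ) := by
    rw [div_le_iff₀ hkpos] at h4; linarith [h4]
  calc Real.sqrt n ≤ Real.sqrt ((k:ℝ)*(k:ℝ)) := Real.sqrt_le_sqrt h5
    _ = (k:ℝ) := Real.sqrt_mul_self hkpos.le
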